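/- Convergence in the integrator for the Kurzweil–Stieltjes integral: let f : [a,b] → ℝ have bounded variation, and g_n : [a,b] → ℝ be such that (K)∫_a^b f dg_n exists for every n and g_n → g uniformly on [a,b]. Then (K)∫_a^b f dg exists and lim_{n→∞} (K)∫_a^b f dg_n = (K)∫_a^b f dg. -/

import Mathlib

open Set Filter

/-- A tagged partition of `[a,b]`: points `a = pts 0 < pts 1 < … < pts n = b`
with tags `tag j ∈ [pts j, pts (j+1)]`. -/
structure TaggedPartition (a b : ℝ) where
  n : ℕ
  pts : ℕ → ℝ
  tag : ℕ → ℝ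
  n_pos : 0 < n
  pts_zero : pts 0 = a
  pts_last : pts n = b
  pts_mono : ∀ j < n, pts j < pts (j + 1)
  tag_mem : ∀ j < n, tag j ∈ Set.Icc (pts j) (pts (j + 1))

/-- Riemann–Stieltjes sum `S(f, dg, P)`. -/
def RS (f g : ℝ → ℝ) {a b : ℝ} (P : TaggedPartition a b) : ℝ :=
  ∑ j ∈ Finset.range P.n, f (P.tag j) * (g (P.pts (j + 1)) - g (P.pts j))

/-- `P` is `δ`-fine. -/
def IsFine (δ : ℝ → ℝ) {a b : ℝ} (P : TaggedPartition a b) : Prop :=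
  ∀ j < P.n, Set.Icc (P.pts j) (P.pts (j + 1)) ⊆
    Set.Icc (P.tag j - δ (P.tag j)) (P.tag j + δ (P.tag j))

/-- The Kurzweil–Stieltjes integral `(K)∫_a^b f dg` exists and equals `I`. -/
def HasKS (f g : ℝ → ℝ) (a b I : ℝ) : Prop :=
  ∀ ε > 0, ∃ δ : ℝ → ℝ, (∀ t ∈ Set.Icc a b, 0 < δ t ∧ δ t < 1) ∧
    ∀ P : TaggedPartition a b, IsFine δ P → |RS f g P - I| < ε

/-- The division of `P` contains all points of the finite set `D`. -/
def Refines {a b : ℝ} (P : TaggedPartition a b) (D : Finset ℝ) : Prop :=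
  ∀ x ∈ D, ∃ j ≤ P.n, P.pts j = x

/-- All tags of `P` lie strictly inside the corresponding subintervals. -/
def InteriorTags {a b : ℝ} (P : TaggedPartition a b) : Prop :=
  ∀ j < P.n, P.pts j < P.tag j ∧ P.tag j < P.pts (j + 1)

/-- The Dushnik integral `(D)∫_a^b f dg` exists and equals `I`. -/
def HasDushnik (f g : ℝ → ℝ) (a b I : ℝ) : Prop :=
  ∀ ε > 0, ∃ D : Finset ℝ, ↑D ⊆ Set.Icc a b ∧
    ∀ P : TaggedPartition a b, Refines P D → InteriorTags P → |RS f g P - I| < ε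

/-- `f` is regulated on `[a,b]`: it has finite one-sided limits (within `[a,b]`)
at every point where they make sense. -/
def Regulated (f : ℝ → ℝ) (a b : ℝ) : Prop :=
  (∀ t ∈ Set.Ioc a b, ∃ L : ℝ, Filter.Tendsto f (nhdsWithin t (Set.Ico a t)) (nhds L)) ∧
  (∀ t ∈ Set.Ico a b, ∃ L : ℝ, Filter.Tendsto f (nhdsWithin t (Set.Ioc t b)) (nhds L))

/-- The Young sum `S_Y(f, dg, P)`, where `gl t = g(t-)` and `gr t = g(t+)`
are the one-sided limit functions of `g`. -/
def YS (f gl gr g : ℝ → ℝ) {a b : ℝ} (P : TaggedPartition a b) : ℝ :=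
  ∑ j ∈ Finset.range P.n,
    (f (P.pts j) * (gr (P.pts j) - g (P.pts j))
      + f (P.tag j) * (gl (P.pts (j + 1)) - gr (P.pts j))
      + f (P.pts (j + 1)) * (g (P.pts (j + 1)) - gl (P.pts (j + 1))))

/-- The Young integral `(Y)∫_a^b f dg` exists and equals `I` (here `gl`, `gr`
are the one-sided limit functions of `g`). -/
def HasYoung (f gl gr g : ℝ → ℝ) (a b I : ℝ) : Prop :=
  ∀ ε > 0, ∃ D : Finset ℝ, ↑D ⊆ Set.Icc a b ∧
    ∀ P : TaggedPartition a b, Refines P D → InteriorTags P → |YS f gl gr g P - I| < ε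

/-- `f` is a finite step function on `[a,b]`: constant on the open subintervals
of some division `a = σ 0 < … < σ m = b`. -/
def IsStepFunction (f : ℝ → ℝ) (a b : ℝ) : Prop :=
  ∃ (m : ℕ) (σ : ℕ → ℝ), 0 < m ∧ σ 0 = a ∧ σ m = b ∧ (∀ k < m, σ k < σ (k + 1)) ∧
    ∀ k < m, ∀ x ∈ Set.Ioo (σ k) (σ (k + 1)), ∀ y ∈ Set.Ioo (σ k) (σ (k + 1)), f x = f y

/-- The (real-valued) total variation of `g` on `[a,b]`. -/
noncomputable def var (g : ℝ → ℝ) (a b : ℝ) : ℝ :=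
  (eVariationOn g (Set.Icc a b)).toReal

namespace KS15

lemma pts_le_pts {a b : ℝ} (P : TaggedPartition a b) {i j : ℕ} (hij : i ≤ j) (hj : j ≤ P.n) :
    P.pts i ≤ P.pts j := by
  induction j with
  | zero => simp [Nat.le_zero.mp hij]
  | succ k ih =>
    rcases Nat.lt_or_ge i (k + 1) with h | h
    · exact le_trans (ih (Nat.lt_succ_iff.mp h) (le_trans (Nat.le_succ k) hj))
        (le_of_lt (P.pts_mono k (Nat.lt_of_succ_le hj)))
    · have : i = k + 1 := le_antisymm hij h
      simp [this]

lemma pts_mem {a b : ℝ} (P : TaggedPartition a b) {j : ℕ} (hj : j ≤ P.n) :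
    P.pts j ∈ Set.Icc a b := by
  constructor
  · calc a = P.pts 0 := P.pts_zero.symm
      _ ≤ P.pts j := pts_le_pts P (Nat.zero_le j) hj
  · calc P.pts j ≤ P.pts P.n := pts_le_pts P hj le_rfl
      _ = b := P.pts_last

lemma tag_mem_Icc {a b : ℝ} (P : TaggedPartition a b) {j : ℕ} (hj : j < P.n) :
    P.tag j ∈ Set.Icc a b := by
  obtain ⟨h1, h2⟩ := P.tag_mem j hj
  exact ⟨le_trans (pts_mem P hj.le).1 h1, le_trans h2 (pts_mem P hj).2⟩

lemma tag_mono {a b : ℝ} (P : TaggedPartition a b) {i j : ℕ} (hij : i ≤ j) (hj : j < P.n) :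
    P.tag i ≤ P.tag j := by
  rcases eq_or_lt_of_le hij with rfl | h
  · exact le_rfl
  · calc P.tag i ≤ P.pts (i + 1) := (P.tag_mem i (lt_trans h hj)).2
      _ ≤ P.pts j := pts_le_pts P h hj.le
      _ ≤ P.tag j := (P.tag_mem j hj).1

lemma a_le_b {a b : ℝ} (P : TaggedPartition a b) : a ≤ b := by
  calc a = P.pts 0 := P.pts_zero.symm
    _ ≤ P.pts P.n := pts_le_pts P (Nat.zero_le _) le_rfl
    _ = b := P.pts_last

lemma var_sum_le {a b : ℝ} {f : ℝ → ℝ} (hf : BoundedVariationOn f (Set.Icc a b))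
    {u : ℕ → ℝ} (hu : Monotone u) (us : ∀ i, u i ∈ Set.Icc a b) (n : ℕ) :
    ∑ i ∈ Finset.range n, |f (u (i + 1)) - f (u i)| ≤ var f a b := by
  have h1 := eVariationOn.sum_le (f := f) (n := n) hu us
  have h2 : (∑ i ∈ Finset.range n, edist (f (u (i + 1))) (f (u i))).toReal
      = ∑ i ∈ Finset.range n, |f (u (i + 1)) - f (u i)| := by
    rw [ENNReal.toReal_sum (fun i _ => edist_ne_top _ _)]
    exact Finset.sum_congr rfl fun i _ => by rw [← dist_edist, Real.dist_eq]
  rw [var, ← h2]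
  exact ENNReal.toReal_mono hf h1

lemma abs_RS_sub_le {a b : ℝ} (f g1 g2 : ℝ → ℝ) (P : TaggedPartition a b)
    {η M V : ℝ} (hη : ∀ t ∈ Set.Icc a b, |g1 t - g2 t| ≤ η)
    (hM : ∀ t ∈ Set.Icc a b, |f t| ≤ M)
    (hV : ∀ (u : ℕ → ℝ), Monotone u → (∀ i, u i ∈ Set.Icc a b) →
      ∀ m, ∑ j ∈ Finset.range m, |f (u (j + 1)) - f (u j)| ≤ V) :
    |RS f g1 P - RS f g2 P| ≤ (2 * M + V) * η := by
  obtain ⟨m, hm⟩ : ∃ m, P.n = m + 1 := ⟨P.n - 1, (Nat.succ_pred_eq_of_pos P.n_pos).symm⟩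
  set h : ℝ → ℝ := fun t => g1 t - g2 t with hh
  have hab' : a ≤ b := a_le_b P
  have hamem : a ∈ Set.Icc a b := ⟨le_rfl, hab'⟩
  have hη0 : 0 ≤ η := le_trans (abs_nonneg _) (hη a hamem)
  have hM0 : 0 ≤ M := le_trans (abs_nonneg _) (hM a hamem)
  have e0 : RS f g1 P - RS f g2 P
      = ∑ j ∈ Finset.range P.n, f (P.tag j) * (h (P.pts (j + 1)) - h (P.pts j)) := by
    unfold RS
    rw [← Finset.sum_sub_distrib]
    exact Finset.sum_congr rfl fun j _ => by simp only [hh]; ring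
  have e1 : RS f g1 P - RS f g2 P
      = (∑ j ∈ Finset.range m, (f (P.tag j) - f (P.tag (j + 1))) * h (P.pts (j + 1)))
        + f (P.tag m) * h (P.pts (m + 1)) - f (P.tag 0) * h (P.pts 0) := by
    rw [e0, hm]
    have A : ∑ j ∈ Finset.range (m + 1), f (P.tag j) * (h (P.pts (j + 1)) - h (P.pts j))
        = ∑ j ∈ Finset.range (m + 1), f (P.tag j) * h (P.pts (j + 1))
          - ∑ j ∈ Finset.range (m + 1), f (P.tag j) * h (P.pts j) := by
      rw [← Finset.sum_sub_distrib]
      exact Finset.sum_congr rfl fun j _ => by ring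
    have B : ∑ j ∈ Finset.range m, (f (P.tag j) - f (P.tag (j + 1))) * h (P.pts (j + 1))
        = ∑ j ∈ Finset.range m, f (P.tag j) * h (P.pts (j + 1))
          - ∑ j ∈ Finset.range m, f (P.tag (j + 1)) * h (P.pts (j + 1)) := by
      rw [← Finset.sum_sub_distrib]
      exact Finset.sum_congr rfl fun j _ => by ring
    rw [A, Finset.sum_range_succ, Finset.sum_range_succ'
      (fun j => f (P.tag j) * h (P.pts j)) m, B]
    ring
  -- pointwise bounds
  have hpt : ∀ j ≤ P.n, |h (P.pts j)| ≤ η := fun j hj => hη _ (pts_mem P hj)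
  have htg : ∀ j, j < P.n → |f (P.tag j)| ≤ M := fun j hj => hM _ (tag_mem_Icc P hj)
  have hmlt : m < P.n := by omega
  have hsumV : ∑ j ∈ Finset.range m, |f (P.tag j) - f (P.tag (j + 1))| ≤ V := by
    have hu : Monotone (fun i => P.tag (min i m)) := fun i j hij =>
      tag_mono P (min_le_min hij le_rfl) (lt_of_le_of_lt (min_le_right _ _) hmlt)
    have hus : ∀ i, P.tag (min i m) ∈ Set.Icc a b := fun i =>
      tag_mem_Icc P (lt_of_le_of_lt (min_le_right _ _) hmlt)
    have := hV (fun i => P.tag (min i m)) hu hus m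
    calc ∑ j ∈ Finset.range m, |f (P.tag j) - f (P.tag (j + 1))|
        = ∑ j ∈ Finset.range m, |f (P.tag (min (j + 1) m)) - f (P.tag (min j m))| := by
          refine Finset.sum_congr rfl fun j hj => ?_
          have hj' : j < m := Finset.mem_range.mp hj
          rw [min_eq_left hj'.le, min_eq_left (Nat.succ_le_of_lt hj'), abs_sub_comm]
      _ ≤ V := this
  have hS : |∑ j ∈ Finset.range m, (f (P.tag j) - f (P.tag (j + 1))) * h (P.pts (j + 1))|
      ≤ V * η := by
    calc |∑ j ∈ Finset.range m, (f (P.tag j) - f (P.tag (j + 1))) * h (P.pts (j + 1))|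
        ≤ ∑ j ∈ Finset.range m, |(f (P.tag j) - f (P.tag (j + 1))) * h (P.pts (j + 1))| :=
          Finset.abs_sum_le_sum_abs _ _
      _ ≤ ∑ j ∈ Finset.range m, |f (P.tag j) - f (P.tag (j + 1))| * η := by
          refine Finset.sum_le_sum fun j hj => ?_
          rw [abs_mul]
          exact mul_le_mul_of_nonneg_left
            (hpt (j + 1) (by have := Finset.mem_range.mp hj; omega)) (abs_nonneg _)
      _ = (∑ j ∈ Finset.range m, |f (P.tag j) - f (P.tag (j + 1))|) * η := by
          rw [Finset.sum_mul]
      _ ≤ V * η := mul_le_mul_of_nonneg_right hsumV hη0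
  have hX : |f (P.tag m) * h (P.pts (m + 1))| ≤ M * η := by
    rw [abs_mul]
    exact mul_le_mul (htg m hmlt) (hpt (m + 1) (by omega)) (abs_nonneg _) hM0
  have hY : |f (P.tag 0) * h (P.pts 0)| ≤ M * η := by
    rw [abs_mul]
    exact mul_le_mul (htg 0 P.n_pos) (hpt 0 (Nat.zero_le _)) (abs_nonneg _) hM0
  rw [e1]
  calc |(∑ j ∈ Finset.range m, (f (P.tag j) - f (P.tag (j + 1))) * h (P.pts (j + 1)))
        + f (P.tag m) * h (P.pts (m + 1)) - f (P.tag 0) * h (P.pts 0)|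
      ≤ |(∑ j ∈ Finset.range m, (f (P.tag j) - f (P.tag (j + 1))) * h (P.pts (j + 1)))
        + f (P.tag m) * h (P.pts (m + 1))| + |f (P.tag 0) * h (P.pts 0)| := abs_sub _ _
    _ ≤ |∑ j ∈ Finset.range m, (f (P.tag j) - f (P.tag (j + 1))) * h (P.pts (j + 1))|
        + |f (P.tag m) * h (P.pts (m + 1))| + |f (P.tag 0) * h (P.pts 0)| := by
          have := abs_add_le (∑ j ∈ Finset.range m,
            (f (P.tag j) - f (P.tag (j + 1))) * h (P.pts (j + 1)))
            (f (P.tag m) * h (P.pts (m + 1)))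
          linarith
    _ ≤ V * η + M * η + M * η := by linarith
    _ = (2 * M + V) * η := by ring

end KS15

namespace KS15

/-- Single-interval tagged partition of `[a,x]` with tag `t`. -/
def single (a x t : ℝ) (h : a < x) (ht : t ∈ Set.Icc a x) : TaggedPartition a x where
  n := 1
  pts := fun j => if j = 0 then a else x
  tag := fun _ => t
  n_pos := one_pos
  pts_zero := by simp
  pts_last := by simp
  pts_mono := by
    intro j hj
    have hj0 : j = 0 := by omega
    subst hj0
    simpa using h
  tag_mem := by
    intro j hj
    have hj0 : j = 0 := by omega
    subst hj0
    simpa using ht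

lemma single_fine {δ : ℝ → ℝ} {a x t : ℝ} (h : a < x) (ht : t ∈ Set.Icc a x)
    (hsub : Set.Icc a x ⊆ Set.Icc (t - δ t) (t + δ t)) :
    IsFine δ (single a x t h ht) := by
  intro j hj
  have hj1 : j < 1 := hj
  have hj0 : j = 0 := by omega
  subst hj0
  simpa [single] using hsub

/-- Extend a tagged partition of `[a,x]` by the interval `[x,d]` with tag `t`. -/
def extend {a x : ℝ} (P : TaggedPartition a x) (d t : ℝ) (hxd : x < d)
    (ht : t ∈ Set.Icc x d) : TaggedPartition a d where
  n := P.n + 1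
  pts := fun j => if j = P.n + 1 then d else P.pts j
  tag := fun j => if j = P.n then t else P.tag j
  n_pos := Nat.succ_pos _
  pts_zero := by
    have : (0 : ℕ) ≠ P.n + 1 := by omega
    simp [this, P.pts_zero]
  pts_last := by simp
  pts_mono := by
    intro j hj
    rcases Nat.lt_or_ge j P.n with h | h
    · have h1 : j ≠ P.n + 1 := by omega
      have h2 : j + 1 ≠ P.n + 1 := by omega
      simpa [h1, h2, show j ≠ P.n by omega] using P.pts_mono j h
    · have hj' : j = P.n := by omega
      have h1 : j ≠ P.n + 1 := by omega
      have h2 : j + 1 = P.n + 1 := by omega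
      have h3 : P.pts j = x := by rw [hj']; exact P.pts_last
      simp [h1, h2, h3, hxd]
  tag_mem := by
    intro j hj
    rcases Nat.lt_or_ge j P.n with h | h
    · have h1 : j ≠ P.n + 1 := by omega
      have h2 : j + 1 ≠ P.n + 1 := by omega
      have h3 : j ≠ P.n := by omega
      simpa [h1, h2, h3] using P.tag_mem j h
    · have hj' : j = P.n := by omega
      have h1 : j ≠ P.n + 1 := by omega
      have h2 : j + 1 = P.n + 1 := by omega
      have h3 : P.pts P.n = x := P.pts_last
      simpa [h1, h2, h3, hj'] using ht
  
lemma extend_fine {δ : ℝ → ℝ} {a x : ℝ} {P : TaggedPartition a x} (hP : IsFine δ P)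
    {d t : ℝ} (hxd : x < d) (ht : t ∈ Set.Icc x d)
    (hsub : Set.Icc x d ⊆ Set.Icc (t - δ t) (t + δ t)) :
    IsFine δ (extend P d t hxd ht) := by
  intro j hj
  rcases Nat.lt_or_ge j P.n with h | h
  · have h1 : j ≠ P.n + 1 := by omega
    have h2 : j + 1 ≠ P.n + 1 := by omega
    have h3 : j ≠ P.n := by omega
    simpa [extend, h1, h2, h3] using hP j h
  · have hj' : j = P.n := by
      have : j < P.n + 1 := hj
      omega
    have h1 : j ≠ P.n + 1 := by omega
    have h2 : j + 1 = P.n + 1 := by omega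
    have h3 : P.pts P.n = x := P.pts_last
    simpa [extend, h1, h2, h3, hj'] using hsub

/-- Cousin's lemma: every positive gauge on `[a,b]` admits a fine tagged partition. -/
lemma cousin {a b : ℝ} (hab : a < b) (δ : ℝ → ℝ) (hδ : ∀ t ∈ Set.Icc a b, 0 < δ t) :
    ∃ P : TaggedPartition a b, IsFine δ P := by
  set S : Set ℝ := {x | x ∈ Set.Ioc a b ∧ ∃ P : TaggedPartition a x, IsFine δ P} with hS
  have hδa : 0 < δ a := hδ a ⟨le_rfl, hab.le⟩
  have hx0 : min b (a + δ a) ∈ S := by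
    have h1 : a < min b (a + δ a) := lt_min hab (by linarith)
    have ht : a ∈ Set.Icc a (min b (a + δ a)) := ⟨le_rfl, h1.le⟩
    have hsub : Set.Icc a (min b (a + δ a)) ⊆ Set.Icc (a - δ a) (a + δ a) := by
      intro y hy
      exact ⟨by linarith [hy.1], le_trans hy.2 (min_le_right _ _)⟩
    refine Set.mem_setOf_eq ▸ ⟨⟨h1, min_le_left _ _⟩, single a (min b (a + δ a)) a h1 ht,
      single_fine h1 ht hsub⟩
  have hne : S.Nonempty := ⟨_, hx0⟩
  have hbdd : BddAbove S := ⟨b, fun x hx => hx.1.2⟩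
  obtain ⟨c, hc⟩ : ∃ c : ℝ, c = sSup S := ⟨_, rfl⟩
  have hcb : c ≤ b := by rw [hc]; exact csSup_le hne fun x hx => hx.1.2
  have hac : a < c := by
    rw [hc]
    exact lt_of_lt_of_le (lt_min hab (by linarith)) (le_csSup hbdd hx0)
  have hδc : 0 < δ c := hδ c ⟨hac.le, hcb⟩
  obtain ⟨x, hxS, hxgt⟩ := exists_lt_of_lt_csSup hne (show c - δ c < sSup S by rw [← hc]; linarith)
  have hxc : x ≤ c := by rw [hc]; exact le_csSup hbdd hxS
  have hPc : ∃ P : TaggedPartition a c, IsFine δ P := by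
    rcases eq_or_lt_of_le hxc with rfl | hlt
    · exact hxS.2
    · obtain ⟨P, hP⟩ := hxS.2
      have ht : c ∈ Set.Icc x c := ⟨hlt.le, le_rfl⟩
      have hsub : Set.Icc x c ⊆ Set.Icc (c - δ c) (c + δ c) := by
        intro y hy
        exact ⟨by linarith [hy.1], by linarith [hy.2]⟩
      exact ⟨extend P c c hlt ht, extend_fine hP hlt ht hsub⟩
  obtain ⟨Pc, hPcf⟩ := hPc
  rcases eq_or_lt_of_le hcb with rfl | hlt
  · exact ⟨Pc, hPcf⟩
  · exfalso
    obtain ⟨d, hd⟩ : ∃ d : ℝ, d = min b (c + δ c) := ⟨_, rfl⟩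
    have hcd : c < d := by rw [hd]; exact lt_min hlt (by linarith)
    have ht : c ∈ Set.Icc c d := ⟨le_rfl, hcd.le⟩
    have hsub : Set.Icc c d ⊆ Set.Icc (c - δ c) (c + δ c) := by
      intro y hy
      refine ⟨by linarith [hy.1], ?_⟩
      have : d ≤ c + δ c := by rw [hd]; exact min_le_right _ _
      linarith [hy.2]
    have hdb : d ≤ b := by rw [hd]; exact min_le_left _ _
    have hdS : d ∈ S := ⟨⟨lt_trans hac hcd, hdb⟩, extend Pc d c hcd ht,
      extend_fine hPcf hcd ht hsub⟩
    have hdc : d ≤ c := by rw [hc]; exact le_csSup hbdd hdS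
    linarith

end KS15

namespace KS15

lemma fine_mono {a b : ℝ} {δ δ' : ℝ → ℝ} (h : ∀ t ∈ Set.Icc a b, δ t ≤ δ' t)
    {P : TaggedPartition a b} (hP : IsFine δ P) : IsFine δ' P := by
  intro j hj y hy
  have h2 := hP j hj hy
  have ht := h _ (tag_mem_Icc P hj)
  exact ⟨by linarith [h2.1], by linarith [h2.2]⟩

end KS15

theorem stmt15' (a b : ℝ) (hab : a < b) (f : ℝ → ℝ)
    (hf : BoundedVariationOn f (Set.Icc a b))
    (g : ℕ → ℝ → ℝ) (glim : ℝ → ℝ) (I : ℕ → ℝ)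
    (hgn : ∀ n, HasKS f (g n) a b (I n))
    (hunif : TendstoUniformlyOn g glim Filter.atTop (Set.Icc a b)) :
    ∃ J : ℝ, HasKS f glim a b J ∧ Filter.Tendsto I Filter.atTop (nhds J) := by
  classical
  have hV0 : 0 ≤ var f a b := ENNReal.toReal_nonneg
  obtain ⟨M, hM⟩ : ∃ M : ℝ, M = |f a| + var f a b := ⟨_, rfl⟩
  have hMb : ∀ t ∈ Set.Icc a b, |f t| ≤ M := by
    intro t ht
    have h1 : dist (f t) (f a) ≤ var f a b := hf.dist_le ht ⟨le_rfl, hab.le⟩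
    rw [Real.dist_eq] at h1
    calc |f t| = |f t - f a + f a| := by norm_num
      _ ≤ |f t - f a| + |f a| := abs_add_le _ _
      _ ≤ M := by rw [hM]; linarith
  obtain ⟨C, hC⟩ : ∃ C : ℝ, C = 2 * M + var f a b := ⟨_, rfl⟩
  have hM0 : 0 ≤ M := by rw [hM]; positivity
  have hC0 : 0 ≤ C := by rw [hC]; positivity
  have key : ∀ (g1 g2 : ℝ → ℝ) (η : ℝ), (∀ t ∈ Set.Icc a b, |g1 t - g2 t| ≤ η) →
      ∀ P : TaggedPartition a b, |RS f g1 P - RS f g2 P| ≤ C * η := by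
    intro g1 g2 η hη P
    have := KS15.abs_RS_sub_le f g1 g2 P hη hMb
      (fun u hu us m => KS15.var_sum_le hf hu us m)
    rw [hC]
    exact this
  rw [Metric.tendstoUniformlyOn_iff] at hunif
  have hCsmall : ∀ ε : ℝ, 0 < ε → C * (ε / (2 * (C + 1))) < ε / 2 := by
    intro ε hε
    rw [mul_div_assoc', div_lt_div_iff₀ (by positivity) (by norm_num)]
    nlinarith
  have hcauchy : CauchySeq I := by
    rw [Metric.cauchySeq_iff]
    intro ε hε
    obtain ⟨N, hN⟩ := Filter.eventually_atTop.mp (hunif (ε / (4 * (C + 1))) (by positivity))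
    refine ⟨N, fun m hm n hn => ?_⟩
    obtain ⟨δ1, hδ1p, hδ1⟩ := hgn m (ε / 4) (by positivity)
    obtain ⟨δ2, hδ2p, hδ2⟩ := hgn n (ε / 4) (by positivity)
    obtain ⟨P, hP⟩ := KS15.cousin hab (fun t => min (δ1 t) (δ2 t))
      (fun t ht => lt_min (hδ1p t ht).1 (hδ2p t ht).1)
    have hP1 : IsFine δ1 P := KS15.fine_mono (fun t _ => min_le_left _ _) hP
    have hP2 : IsFine δ2 P := KS15.fine_mono (fun t _ => min_le_right _ _) hP
    have hA := hδ1 P hP1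
    have hB := hδ2 P hP2
    have hη : ∀ t ∈ Set.Icc a b, |g m t - g n t| ≤ ε / (2 * (C + 1)) := by
      intro t ht
      have h1 := hN m hm t ht
      have h2 := hN n hn t ht
      rw [dist_comm, Real.dist_eq] at h1
      rw [Real.dist_eq] at h2
      calc |g m t - g n t| = |(g m t - glim t) + (glim t - g n t)| := by norm_num
        _ ≤ |g m t - glim t| + |glim t - g n t| := abs_add_le _ _
        _ ≤ ε / (2 * (C + 1)) := by
            have hne : C + 1 ≠ 0 := by positivity
            have : ε / (4 * (C + 1)) + ε / (4 * (C + 1)) = ε / (2 * (C + 1)) := by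
              field_simp
              ring
            linarith
    have hmid := key (g m) (g n) _ hη P
    have hRSeq : RS f (g m) P - RS f (g n) P
        = (RS f (g m) P - I m) - (RS f (g n) P - I n) + (I m - I n) := by ring
    have hCs := hCsmall ε hε
    rw [Real.dist_eq, abs_lt]
    obtain ⟨a1, a2⟩ := abs_lt.mp hA
    obtain ⟨b1, b2⟩ := abs_lt.mp hB
    obtain ⟨c1, c2⟩ := abs_le.mp hmid
    constructor <;> nlinarith
  obtain ⟨J, hJ⟩ := cauchySeq_tendsto_of_complete hcauchy
  refine ⟨J, ?_, hJ⟩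
  intro ε hε
  have hev1 := (hunif (ε / (4 * (C + 1))) (by positivity))
  have hev2 : ∀ᶠ n in Filter.atTop, dist (I n) J < ε / 4 :=
    (Metric.tendsto_nhds.mp hJ) (ε / 4) (by positivity)
  obtain ⟨n, hn1, hn2⟩ := (hev1.and hev2).exists
  obtain ⟨δ, hδp, hδ⟩ := hgn n (ε / 4) (by positivity)
  refine ⟨δ, hδp, fun P hP => ?_⟩
  have hA := hδ P hP
  have hη : ∀ t ∈ Set.Icc a b, |glim t - g n t| ≤ ε / (4 * (C + 1)) := by
    intro t ht
    have := hn1 t ht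
    rw [Real.dist_eq] at this
    linarith
  have hmid := key glim (g n) _ hη P
  have hCs : C * (ε / (4 * (C + 1))) < ε / 2 := by
    have h2 := hCsmall ε hε
    have : C * (ε / (4 * (C + 1))) ≤ C * (ε / (2 * (C + 1))) := by
      apply mul_le_mul_of_nonneg_left _ hC0
      apply div_le_div_of_nonneg_left hε.le (by positivity) (by linarith)
    linarith
  rw [Real.dist_eq] at hn2
  obtain ⟨a1, a2⟩ := abs_lt.mp hA
  obtain ⟨b1, b2⟩ := abs_lt.mp hn2
  obtain ⟨c1, c2⟩ := abs_le.mp hmid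
  rw [abs_lt]
  constructor <;> nlinarith


/-- convergence in the integrator for the Kurzweil–Stieltjes
integral. -/
theorem stmt15 (a b : ℝ) (hab : a < b) (f : ℝ → ℝ)
    (hf : BoundedVariationOn f (Set.Icc a b))
    (g : ℕ → ℝ → ℝ) (glim : ℝ → ℝ) (I : ℕ → ℝ)
    (hgn : ∀ n, HasKS f (g n) a b (I n))
    (hunif : TendstoUniformlyOn g glim Filter.atTop (Set.Icc a b)) :
    ∃ J : ℝ, HasKS f glim a b J ∧ Filter.Tendsto I Filter.atTop (nhds J) := by
  exact stmt15' a b hab f hf g glim I hgn hunif
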